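/- arXiv:math/0211068 — 2 statements merged into one kernel-verified Lean document; each statement's English description precedes it below -/
import Mathlib

section
/- Let F be an R-subalgebra of g(S) such that every element of g(S) can be written uniquely in the form Σ_{i=0}^{m-1} z^i y_i with y_0, …, y_{m-1} ∈ F. Then there exists a 1-cocycle u on Γ in Aut_S(g(S)) with F = g(S)_u; explicitly, if for each ī ∈ Γ one lets w_ī be the unique R-linear, ι_i-semilinear automorphism of g(S) fixing F pointwise, then u_ī := w_ī ∘ (id ⊗ ι_i)⁻¹ is such a 1-cocycle. -/
open scoped TensorProduct
open LaurentPolynomial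

set_option maxHeartbeats 1000000
set_option synthInstance.maxHeartbeats 400000

noncomputable section

namespace LoopPaper

variable {k : Type*} [Field k] {g : Type*} [LieRing g] [LieAlgebra k g]

/-- A linear automorphism of a Lie algebra is a Lie algebra automorphism if it
preserves brackets. -/
def IsLieAut (σ : g ≃ₗ[k] g) : Prop := ∀ x y : g, σ ⁅x, y⁆ = ⁅σ x, σ y⁆

theorem IsLieAut.one : IsLieAut (1 : g ≃ₗ[k] g) := fun _ _ => rfl

theorem IsLieAut.mul {σ τ : g ≃ₗ[k] g} (hσ : IsLieAut σ) (hτ : IsLieAut τ) :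
    IsLieAut (σ * τ) := fun x y => by
  show σ (τ ⁅x, y⁆) = ⁅σ (τ x), σ (τ y)⁆
  rw [hτ, hσ]

theorem IsLieAut.inv {σ : g ≃ₗ[k] g} (hσ : IsLieAut σ) : IsLieAut σ⁻¹ := fun x y => by
  apply σ.injective
  have h1 : ∀ z, σ (σ⁻¹ z) = z := fun z => σ.apply_symm_apply z
  rw [h1, hσ, h1, h1]

/-! ### The variable-scaling automorphism `z ↦ c z` of `k[z,z⁻¹]` -/

/-- The unit `c^n • z^n` of the Laurent polynomial ring. -/
def scaleUnit (c : kˣ) (n : ℤ) : (LaurentPolynomial k)ˣ where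
  val := ((c ^ n : kˣ) : k) • T n
  inv := ((c ^ (-n) : kˣ) : k) • T (-n)
  val_inv := by
    rw [smul_mul_smul_comm, ← T_add, ← Units.val_mul, ← zpow_add, add_neg_cancel, zpow_zero,
      Units.val_one, T_zero, one_smul]
  inv_val := by
    rw [smul_mul_smul_comm, ← T_add, ← Units.val_mul, ← zpow_add, neg_add_cancel, zpow_zero,
      Units.val_one, T_zero, one_smul]

/-- The homomorphism `n ↦ c^n • z^n` from `ℤ` to the units of `k[z,z⁻¹]`. -/
def scaleUnitHom (c : kˣ) : Multiplicative ℤ →* (LaurentPolynomial k)ˣ where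
  toFun n := scaleUnit c n.toAdd
  map_one' := Units.ext (by
    show ((c ^ (0 : ℤ) : kˣ) : k) • T (0 : ℤ) = 1
    rw [zpow_zero, Units.val_one, T_zero, one_smul])
  map_mul' a b := Units.ext (by
    show ((c ^ (a.toAdd + b.toAdd) : kˣ) : k) • T (a.toAdd + b.toAdd) =
      (((c ^ a.toAdd : kˣ) : k) • T a.toAdd) * (((c ^ b.toAdd : kˣ) : k) • T b.toAdd)
    rw [smul_mul_smul_comm, ← T_add, ← Units.val_mul, ← zpow_add])

/-- The `k`-algebra endomorphism of `k[z,z⁻¹]` with `z ↦ c z`. -/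
def scaleVar (c : kˣ) : LaurentPolynomial k →ₐ[k] LaurentPolynomial k :=
  AddMonoidAlgebra.lift k _ ℤ ((Units.coeHom _).comp (scaleUnitHom c))

theorem scaleVar_T (c : kˣ) (n : ℤ) : scaleVar c (T n) = ((c ^ n : kˣ) : k) • T n := by
  have h : (T n : LaurentPolynomial k) = AddMonoidAlgebra.of k ℤ (Multiplicative.ofAdd n) := rfl
  rw [h, scaleVar, AddMonoidAlgebra.lift_of]
  rfl

theorem scaleVar_comp (c d : kˣ) :
    (scaleVar c).comp (scaleVar d) = scaleVar (k := k) (c * d) := by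
  apply AddMonoidAlgebra.algHom_ext
  intro n
  have hT : (AddMonoidAlgebra.single n 1 : LaurentPolynomial k) = T n := rfl
  simp only [AlgHom.coe_comp, Function.comp_apply, hT]
  rw [scaleVar_T, map_smul, scaleVar_T, smul_smul, scaleVar_T]
  congr 1
  rw [mul_zpow, Units.val_mul, mul_comm]
  exact Subsingleton.elim _ _

theorem scaleVar_id : scaleVar (1 : kˣ) = AlgHom.id k (LaurentPolynomial k) := by
  apply AddMonoidAlgebra.algHom_ext
  intro n
  have hT : (AddMonoidAlgebra.single n 1 : LaurentPolynomial k) = T n := rfl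
  simp only [hT, AlgHom.coe_id, id_eq]
  rw [scaleVar_T, one_zpow, Units.val_one, one_smul]
  exact Subsingleton.elim _ _

/-- The `k`-algebra automorphism of `k[z,z⁻¹]` with `z ↦ c z`. -/
def scaleVarEquiv (c : kˣ) : LaurentPolynomial k ≃ₐ[k] LaurentPolynomial k :=
  AlgEquiv.ofAlgHom (scaleVar c) (scaleVar c⁻¹)
    (by rw [scaleVar_comp, mul_inv_cancel, scaleVar_id])
    (by rw [scaleVar_comp, inv_mul_cancel, scaleVar_id])

theorem scaleVarEquiv_apply (c : kˣ) (p : LaurentPolynomial k) :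
    scaleVarEquiv c p = scaleVar c p := rfl


/-- `R = k[t,t⁻¹]`, identified with the `k`-subalgebra of `S = k[z,z⁻¹]` generated by
`t = z^m` and `t⁻¹ = z^{-m}`. -/
def Rsub (k : Type*) [Field k] (m : ℕ) : Subalgebra k (LaurentPolynomial k) :=
  Algebra.adjoin k {T (m : ℤ), T (-(m : ℤ))}

/-- `g(S) = g ⊗_k S` is a Lie algebra over `k` (by restriction from `S`). -/
instance instLieAlgebraTensorBase : LieAlgebra k (LaurentPolynomial k ⊗[k] g) where
  lie_smul c x y := by
    have h := lie_smul (algebraMap k (LaurentPolynomial k) c) x y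
    rwa [algebraMap_smul, algebraMap_smul] at h

/-- The underlying submodule `⊕_{i ∈ ℤ} g_ī ⊗ z^i` of the loop algebra. -/
def loopCarrier (ζ : k) (σ : g ≃ₗ[k] g) : Submodule k (LaurentPolynomial k ⊗[k] g) :=
  Submodule.span k {p | ∃ (i : ℤ) (x : g), σ x = ζ ^ i • x ∧ p = T i ⊗ₜ[k] x}

theorem loop_lie_mem {ζ : k} (hζ0 : ζ ≠ 0) {σ : g ≃ₗ[k] g} (hbr : IsLieAut σ)
    {x y : LaurentPolynomial k ⊗[k] g} (hx : x ∈ loopCarrier ζ σ) (hy : y ∈ loopCarrier ζ σ) :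
    ⁅x, y⁆ ∈ loopCarrier ζ σ := by
  have key : ∀ p ∈ {p : LaurentPolynomial k ⊗[k] g |
      ∃ (i : ℤ) (x : g), σ x = ζ ^ i • x ∧ p = T i ⊗ₜ[k] x},
      ∀ q, q ∈ loopCarrier ζ σ → ⁅p, q⁆ ∈ loopCarrier ζ σ := by
    rintro p ⟨i, a, ha, rfl⟩ q hq
    unfold loopCarrier at hq ⊢
    induction hq using Submodule.span_induction with
    | mem q hq =>
      obtain ⟨j, b, hb, rfl⟩ := hq
      rw [LieAlgebra.ExtendScalars.bracket_tmul, ← T_add]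
      refine Submodule.subset_span ⟨i + j, ⁅a, b⁆, ?_, rfl⟩
      rw [hbr, ha, hb, smul_lie, lie_smul, smul_smul, ← zpow_add₀ hζ0]
    | zero =>
      have h0 : ⁅(T i ⊗ₜ[k] a : LaurentPolynomial k ⊗[k] g), (0 : LaurentPolynomial k ⊗[k] g)⁆ = 0 :=
        lie_zero (T i ⊗ₜ[k] a : LaurentPolynomial k ⊗[k] g)
      rw [h0]; exact zero_mem _
    | add q r _ _ hq hr =>
      have h0 : ⁅(T i ⊗ₜ[k] a : LaurentPolynomial k ⊗[k] g), q + r⁆ = ⁅T i ⊗ₜ[k] a, q⁆ + ⁅T i ⊗ₜ[k] a, r⁆ :=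
        lie_add (T i ⊗ₜ[k] a : LaurentPolynomial k ⊗[k] g) q r
      rw [h0]; exact add_mem hq hr
    | smul c q _ hq =>
      have h0 : ⁅(T i ⊗ₜ[k] a : LaurentPolynomial k ⊗[k] g), c • q⁆ = c • ⁅T i ⊗ₜ[k] a, q⁆ :=
        lie_smul c (T i ⊗ₜ[k] a : LaurentPolynomial k ⊗[k] g) q
      rw [h0]; exact Submodule.smul_mem _ _ hq
  unfold loopCarrier at hx
  induction hx using Submodule.span_induction with
  | mem p hp => exact key p hp y hy
  | zero =>
    have h0 : ⁅(0 : LaurentPolynomial k ⊗[k] g), y⁆ = 0 := zero_lie y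
    rw [h0]; exact zero_mem _
  | add p r _ _ hp hr =>
    have h0 : ⁅p + r, y⁆ = ⁅p, y⁆ + ⁅r, y⁆ := add_lie p r y
    rw [h0]; exact add_mem hp hr
  | smul c p _ hp =>
    have h0 : ⁅c • p, y⁆ = c • ⁅p, y⁆ := smul_lie c p y
    rw [h0]; exact Submodule.smul_mem _ _ hp

/-- The loop algebra `L(g,σ) = ⊕_{i ∈ ℤ} g_ī ⊗ z^i`, a Lie subalgebra (over `k`)
of `g(S) = g ⊗_k S`.  Here `m` is a period of `σ` and `ζ` is the chosen root of unity. -/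
def loopAlgebra (m : ℕ) (ζ : k) (hζ0 : ζ ≠ 0) (hζm : ζ ^ m = 1) (σ : g ≃ₗ[k] g)
    (hbr : IsLieAut σ) (hσ : σ ^ m = 1) : LieSubalgebra k (LaurentPolynomial k ⊗[k] g) where
  __ := loopCarrier ζ σ
  lie_mem' := fun hx hy => loop_lie_mem hζ0 hbr hx hy

theorem mem_loopAlgebra_iff {m : ℕ} {ζ : k} {hζ0 : ζ ≠ 0} {hζm : ζ ^ m = 1} {σ : g ≃ₗ[k] g}
    {hbr : IsLieAut σ} {hσ : σ ^ m = 1} {x : LaurentPolynomial k ⊗[k] g} :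
    x ∈ loopAlgebra m ζ hζ0 hζm σ hbr hσ ↔ x ∈ loopCarrier ζ σ := Iff.rfl

theorem T_smul_loop {ζ : k} (hζ0 : ζ ≠ 0) {σ : g ≃ₗ[k] g} {j : ℤ} (hj : ζ ^ j = 1)
    {x : LaurentPolynomial k ⊗[k] g} (hx : x ∈ loopCarrier ζ σ) :
    (T j : LaurentPolynomial k) • x ∈ loopCarrier ζ σ := by
  unfold loopCarrier at hx ⊢
  induction hx using Submodule.span_induction with
  | mem p hp =>
    obtain ⟨i, a, ha, rfl⟩ := hp
    rw [TensorProduct.smul_tmul', smul_eq_mul, ← T_add]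
    refine Submodule.subset_span ⟨j + i, a, ?_, rfl⟩
    rw [ha, zpow_add₀ hζ0, hj, one_mul]
  | zero => rw [smul_zero]; exact zero_mem _
  | add p q _ _ hp hq => rw [smul_add]; exact add_mem hp hq
  | smul c p _ hp =>
    rw [smul_comm]
    exact Submodule.smul_mem _ _ hp

theorem Rsub_smul_loop {m : ℕ} {ζ : k} (hζ0 : ζ ≠ 0) (hζm : ζ ^ m = 1) {σ : g ≃ₗ[k] g}
    {r : LaurentPolynomial k} (hr : r ∈ Rsub k m) :
    ∀ x ∈ loopCarrier ζ σ, r • x ∈ loopCarrier (g := g) ζ σ := by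
  induction hr using Algebra.adjoin_induction with
  | mem s hs =>
    intro x hx
    rcases hs with rfl | rfl
    · refine T_smul_loop hζ0 ?_ hx
      rw [zpow_natCast, hζm]
    · refine T_smul_loop hζ0 ?_ hx
      rw [zpow_neg, zpow_natCast, hζm, inv_one]
  | algebraMap c =>
    intro x hx
    rw [algebraMap_smul]
    exact Submodule.smul_mem _ _ hx
  | add r s _ _ hr hs =>
    intro x hx
    rw [add_smul]
    exact add_mem (hr x hx) (hs x hx)
  | mul r s _ _ hr hs =>
    intro x hx
    rw [mul_smul]
    exact hr _ (hs x hx)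


/-- The action of `R` on the loop algebra. -/
instance loopSMulR {m : ℕ} {ζ : k} {hζ0 : ζ ≠ 0} {hζm : ζ ^ m = 1} {σ : g ≃ₗ[k] g}
    {hbr : IsLieAut σ} {hσ : σ ^ m = 1} :
    SMul ↥(Rsub k m) ↥(loopAlgebra m ζ hζ0 hζm σ hbr hσ) where
  smul r x := ⟨(r : LaurentPolynomial k) • (x : LaurentPolynomial k ⊗[k] g),
    Rsub_smul_loop hζ0 hζm r.2 _ x.2⟩

theorem loop_smul_coe {m : ℕ} {ζ : k} {hζ0 : ζ ≠ 0} {hζm : ζ ^ m = 1} {σ : g ≃ₗ[k] g}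
    {hbr : IsLieAut σ} {hσ : σ ^ m = 1} (r : ↥(Rsub k m))
    (x : ↥(loopAlgebra m ζ hζ0 hζm σ hbr hσ)) :
    ((r • x : ↥(loopAlgebra m ζ hζ0 hζm σ hbr hσ)) : LaurentPolynomial k ⊗[k] g)
      = (r : LaurentPolynomial k) • (x : LaurentPolynomial k ⊗[k] g) := rfl

/-- The loop algebra is a module over `R = k[t,t⁻¹] ⊆ k[z,z⁻¹]`. -/
instance loopModuleR {m : ℕ} {ζ : k} {hζ0 : ζ ≠ 0} {hζm : ζ ^ m = 1} {σ : g ≃ₗ[k] g}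
    {hbr : IsLieAut σ} {hσ : σ ^ m = 1} :
    Module ↥(Rsub k m) ↥(loopAlgebra m ζ hζ0 hζm σ hbr hσ) where
  one_smul x := Subtype.ext (by simp [loop_smul_coe])
  mul_smul r s x := Subtype.ext (by simp [loop_smul_coe, mul_smul])
  smul_zero r := Subtype.ext (by simp [loop_smul_coe])
  smul_add r x y := Subtype.ext (by simp [loop_smul_coe, smul_add])
  add_smul r s x := Subtype.ext (by simp [loop_smul_coe, add_smul])
  zero_smul x := Subtype.ext (by simp [loop_smul_coe])


/-- The inclusion of the loop algebra in `g(S)`, as an `R`-linear map. -/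
def loopIncl (m : ℕ) (ζ : k) (hζ0 : ζ ≠ 0) (hζm : ζ ^ m = 1) (σ : g ≃ₗ[k] g)
    (hbr : IsLieAut σ) (hσ : σ ^ m = 1) :
    ↥(loopAlgebra m ζ hζ0 hζm σ hbr hσ) →ₗ[↥(Rsub k m)] (LaurentPolynomial k ⊗[k] g) where
  toFun x := ↑x
  map_add' _ _ := rfl
  map_smul' _ _ := rfl

/-- The eigenspace `{x ∈ g : σ(x) = c x}`. -/
def eigSpace (σ : g ≃ₗ[k] g) (c : k) : Submodule k g where
  carrier := {x | σ x = c • x}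
  add_mem' := by
    intro x y hx hy
    show σ (x + y) = c • (x + y)
    rw [map_add, hx, hy, smul_add]
  zero_mem' := by
    show σ 0 = c • (0 : g)
    rw [map_zero, smul_zero]
  smul_mem' := by
    intro t x hx
    show σ (t • x) = c • t • x
    rw [map_smul, hx, smul_comm]

/-- The `R`-algebra automorphism `id ⊗ ι_i` of `g(S)`, where `ι_i(z) = ζ^i z`. -/
def idTensorIota (ζ : k) (hζ0 : ζ ≠ 0) (i : ℤ) :
    (LaurentPolynomial k ⊗[k] g) ≃ₗ[k] (LaurentPolynomial k ⊗[k] g) :=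
  TensorProduct.congr (scaleVarEquiv (Units.mk0 ζ hζ0 ^ i)).toLinearEquiv (LinearEquiv.refl k g)

/-- A `k`-linear automorphism of `g(S)` lies in `Aut_S(g(S))` if it is `S`-linear and
preserves brackets. -/
def IsSAut (f : (LaurentPolynomial k ⊗[k] g) ≃ₗ[k] (LaurentPolynomial k ⊗[k] g)) : Prop :=
  (∀ (s : LaurentPolynomial k) (x : LaurentPolynomial k ⊗[k] g), f (s • x) = s • f x) ∧
    ∀ x y : LaurentPolynomial k ⊗[k] g, f ⁅x, y⁆ = ⁅f x, f y⁆

/-- The action of `ī ∈ Γ = ℤ/mℤ` on `Aut_S(g(S))`:  `ⁱτ = (id ⊗ ι_i) ∘ τ ∘ (id ⊗ ι_i)⁻¹`. -/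
def gammaAct (ζ : k) (hζ0 : ζ ≠ 0) (i : ℤ)
    (τ : (LaurentPolynomial k ⊗[k] g) ≃ₗ[k] (LaurentPolynomial k ⊗[k] g)) :
    (LaurentPolynomial k ⊗[k] g) ≃ₗ[k] (LaurentPolynomial k ⊗[k] g) :=
  ((idTensorIota (g := g) ζ hζ0 i).symm.trans τ).trans (idTensorIota ζ hζ0 i)

/-- A family `u_ī`, `ī ∈ Γ = ℤ/mℤ` (presented as a function on integer representatives),
is a 1-cocycle on `Γ` in `Aut_S(g(S))` if each `u_i` is an `S`-algebra automorphism,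
`u_i` depends only on `i` mod `m`, and `u_{i+j} = u_i ∘ ⁱ(u_j)`. -/
def IsCocycle (m : ℕ) (ζ : k) (hζ0 : ζ ≠ 0)
    (u : ℤ → ((LaurentPolynomial k ⊗[k] g) ≃ₗ[k] (LaurentPolynomial k ⊗[k] g))) : Prop :=
  (∀ i : ℤ, IsSAut (u i)) ∧ (∀ i j : ℤ, (i : ZMod m) = (j : ZMod m) → u i = u j) ∧
    ∀ i j : ℤ, u (i + j) = (gammaAct ζ hζ0 i (u j)).trans (u i)

/-- The fixed point set `g(S)_u = {x : (u_ī ∘ (id ⊗ ι_i)) x = x for all ī}` of a 1-cocycle. -/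
def cocycleFixed (ζ : k) (hζ0 : ζ ≠ 0)
    (u : ℤ → ((LaurentPolynomial k ⊗[k] g) ≃ₗ[k] (LaurentPolynomial k ⊗[k] g))) :
    Set (LaurentPolynomial k ⊗[k] g) :=
  {x | ∀ i : ℤ, u i (idTensorIota ζ hζ0 i x) = x}


/-! ### Auxiliary lemmas for Statement 9 -/

theorem congrL_smul (e : LaurentPolynomial k ≃ₐ[k] LaurentPolynomial k)
    (s : LaurentPolynomial k) (x : LaurentPolynomial k ⊗[k] g) :
    TensorProduct.congr e.toLinearEquiv (LinearEquiv.refl k g) (s • x)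
      = e s • TensorProduct.congr e.toLinearEquiv (LinearEquiv.refl k g) x := by
  induction x using TensorProduct.induction_on with
  | zero => simp
  | tmul p y =>
      rw [TensorProduct.smul_tmul', TensorProduct.congr_tmul, TensorProduct.congr_tmul,
        TensorProduct.smul_tmul', smul_eq_mul, smul_eq_mul]
      simp [map_mul]
  | add a b ha hb => rw [smul_add, map_add, ha, hb, map_add, smul_add]

theorem congrL_bracket (e : LaurentPolynomial k ≃ₐ[k] LaurentPolynomial k)
    (x y : LaurentPolynomial k ⊗[k] g) :
    TensorProduct.congr e.toLinearEquiv (LinearEquiv.refl k g) ⁅x, y⁆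
      = ⁅TensorProduct.congr e.toLinearEquiv (LinearEquiv.refl k g) x,
          TensorProduct.congr e.toLinearEquiv (LinearEquiv.refl k g) y⁆ := by
  set C := TensorProduct.congr e.toLinearEquiv (LinearEquiv.refl k g)
  induction x using TensorProduct.induction_on with
  | zero =>
      have h0 : ⁅(0 : LaurentPolynomial k ⊗[k] g), y⁆ = 0 := zero_lie y
      have h0' : ⁅(0 : LaurentPolynomial k ⊗[k] g), C y⁆ = 0 := zero_lie (C y)
      rw [h0, map_zero, h0']
  | tmul p a =>
      induction y using TensorProduct.induction_on with
      | zero =>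
          have h0 : ⁅(p ⊗ₜ[k] a : LaurentPolynomial k ⊗[k] g), (0 : LaurentPolynomial k ⊗[k] g)⁆
              = 0 := lie_zero (p ⊗ₜ[k] a : LaurentPolynomial k ⊗[k] g)
          have h0' : ⁅C (p ⊗ₜ[k] a), (0 : LaurentPolynomial k ⊗[k] g)⁆ = 0 :=
            lie_zero (C (p ⊗ₜ[k] a))
          rw [h0, map_zero, h0']
      | tmul q b =>
          rw [LieAlgebra.ExtendScalars.bracket_tmul]
          show C ((p * q) ⊗ₜ[k] ⁅a, b⁆) = ⁅C (p ⊗ₜ[k] a), C (q ⊗ₜ[k] b)⁆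
          simp only [C, TensorProduct.congr_tmul, LinearEquiv.refl_apply,
            AlgEquiv.toLinearEquiv_apply, LieAlgebra.ExtendScalars.bracket_tmul, map_mul]
      | add y₁ y₂ h₁ h₂ =>
          have h0 : ⁅(p ⊗ₜ[k] a : LaurentPolynomial k ⊗[k] g), y₁ + y₂⁆
              = ⁅(p ⊗ₜ[k] a : LaurentPolynomial k ⊗[k] g), y₁⁆
                + ⁅(p ⊗ₜ[k] a : LaurentPolynomial k ⊗[k] g), y₂⁆ :=
            lie_add (p ⊗ₜ[k] a : LaurentPolynomial k ⊗[k] g) y₁ y₂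
          have h0' : ⁅C (p ⊗ₜ[k] a), C y₁ + C y₂⁆
              = ⁅C (p ⊗ₜ[k] a), C y₁⁆ + ⁅C (p ⊗ₜ[k] a), C y₂⁆ :=
            lie_add (C (p ⊗ₜ[k] a)) (C y₁) (C y₂)
          rw [h0, map_add, h₁, h₂, map_add, h0']
  | add x₁ x₂ h₁ h₂ =>
      have h0 : ⁅x₁ + x₂, y⁆ = ⁅x₁, y⁆ + ⁅x₂, y⁆ := add_lie x₁ x₂ y
      have h0' : ⁅C x₁ + C x₂, C y⁆ = ⁅C x₁, C y⁆ + ⁅C x₂, C y⁆ := add_lie (C x₁) (C x₂) (C y)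
      rw [h0, map_add, h₁, h₂, map_add, h0']

theorem idTensorIota_smul (ζ : k) (hζ0 : ζ ≠ 0) (i : ℤ) (s : LaurentPolynomial k)
    (x : LaurentPolynomial k ⊗[k] g) :
    idTensorIota ζ hζ0 i (s • x)
      = scaleVarEquiv (Units.mk0 ζ hζ0 ^ i) s • idTensorIota (g := g) ζ hζ0 i x :=
  congrL_smul _ s x

theorem idTensorIota_bracket (ζ : k) (hζ0 : ζ ≠ 0) (i : ℤ)
    (x y : LaurentPolynomial k ⊗[k] g) :
    idTensorIota ζ hζ0 i ⁅x, y⁆ = ⁅idTensorIota ζ hζ0 i x, idTensorIota ζ hζ0 i y⁆ :=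
  congrL_bracket _ x y

theorem idTensorIota_symm_bracket (ζ : k) (hζ0 : ζ ≠ 0) (i : ℤ)
    (x y : LaurentPolynomial k ⊗[k] g) :
    (idTensorIota ζ hζ0 i).symm ⁅x, y⁆
      = ⁅(idTensorIota ζ hζ0 i).symm x, (idTensorIota ζ hζ0 i).symm y⁆ := by
  apply (idTensorIota (g := g) ζ hζ0 i).injective
  rw [LinearEquiv.apply_symm_apply, idTensorIota_bracket,
    LinearEquiv.apply_symm_apply, LinearEquiv.apply_symm_apply]

theorem idTensorIota_symm_smul (ζ : k) (hζ0 : ζ ≠ 0) (i : ℤ) (s : LaurentPolynomial k)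
    (x : LaurentPolynomial k ⊗[k] g) :
    (idTensorIota ζ hζ0 i).symm (s • x)
      = (scaleVarEquiv (Units.mk0 ζ hζ0 ^ i)).symm s • (idTensorIota (g := g) ζ hζ0 i).symm x := by
  apply (idTensorIota (g := g) ζ hζ0 i).injective
  rw [LinearEquiv.apply_symm_apply, idTensorIota_smul, LinearEquiv.apply_symm_apply,
    AlgEquiv.apply_symm_apply]

theorem idTensorIota_comp (ζ : k) (hζ0 : ζ ≠ 0) (i j : ℤ)
    (x : LaurentPolynomial k ⊗[k] g) :
    idTensorIota ζ hζ0 i (idTensorIota ζ hζ0 j x) = idTensorIota ζ hζ0 (i + j) x := by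
  induction x using TensorProduct.induction_on with
  | zero => simp
  | tmul p a =>
      simp only [idTensorIota, TensorProduct.congr_tmul, LinearEquiv.refl_apply,
        AlgEquiv.toLinearEquiv_apply]
      congr 1
      rw [scaleVarEquiv_apply, scaleVarEquiv_apply, scaleVarEquiv_apply]
      rw [show (scaleVar (Units.mk0 ζ hζ0 ^ i)) ((scaleVar (Units.mk0 ζ hζ0 ^ j)) p)
            = ((scaleVar (Units.mk0 ζ hζ0 ^ i)).comp (scaleVar (Units.mk0 ζ hζ0 ^ j))) p from rfl,
        scaleVar_comp, ← zpow_add]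
  | add a b ha hb => rw [map_add, map_add, ha, hb, map_add]

/-- If `F` is an `R`-subalgebra of `g(S)` with the unique
representation property, and for each `i` the map `w_i` is an (`R`-linear)
`ι_i`-semilinear automorphism of `g(S)` fixing `F` pointwise, then
`u_ī := w_ī ∘ (id ⊗ ι_i)⁻¹` is a 1-cocycle on `Γ` in `Aut_S(g(S))` with
`g(S)_u = F`. -/
theorem statement9 {k : Type*} [Field k] [CharZero k] {g : Type*} [LieRing g] [LieAlgebra k g]
    (m : ℕ) (hm : 0 < m) (ζ : k) (hζ : IsPrimitiveRoot ζ m)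
    (F : Submodule ↥(Rsub k m) (LaurentPolynomial k ⊗[k] g))
    (hlie : ∀ x ∈ F, ∀ y ∈ F, ⁅x, y⁆ ∈ F)
    (hrep : ∀ x : LaurentPolynomial k ⊗[k] g,
      ∃! y : Fin m → LaurentPolynomial k ⊗[k] g,
        (∀ i, (y i : LaurentPolynomial k ⊗[k] g) ∈ F) ∧
          x = ∑ i : Fin m, ((T (i : ℤ) : LaurentPolynomial k) • y i))
    (w : ℤ → ((LaurentPolynomial k ⊗[k] g) ≃ₗ[k] (LaurentPolynomial k ⊗[k] g)))
    (hsemi : ∀ (i : ℤ) (s : LaurentPolynomial k) (x : LaurentPolynomial k ⊗[k] g),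
      w i (s • x) = (scaleVarEquiv (Units.mk0 ζ (hζ.ne_zero hm.ne') ^ i) s) • w i x)
    (hbracket : ∀ (i : ℤ) (x y : LaurentPolynomial k ⊗[k] g),
      w i ⁅x, y⁆ = ⁅w i x, w i y⁆)
    (hfix : ∀ (i : ℤ), ∀ x ∈ F, w i x = x) :
    IsCocycle m ζ (hζ.ne_zero hm.ne')
      (fun i : ℤ => (idTensorIota ζ (hζ.ne_zero hm.ne') i).symm.trans (w i)) ∧
    cocycleFixed ζ (hζ.ne_zero hm.ne')
      (fun i : ℤ => (idTensorIota ζ (hζ.ne_zero hm.ne') i).symm.trans (w i))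
      = (F : Set (LaurentPolynomial k ⊗[k] g)) := by
  haveI : NeZero m := ⟨hm.ne'⟩
  have hζ0 : ζ ≠ 0 := hζ.ne_zero hm.ne'
  -- the key computation: `w i` acts on a canonical representation by scaling
  have hkey : ∀ (i : ℤ) (y : Fin m → LaurentPolynomial k ⊗[k] g), (∀ n, y n ∈ F) →
      w i (∑ n : Fin m, ((T ((n : ℤ)) : LaurentPolynomial k) • y n))
        = ∑ n : Fin m, ζ ^ (i * (n : ℤ)) • ((T ((n : ℤ)) : LaurentPolynomial k) • y n) := by
    intro i y hy
    rw [map_sum]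
    refine Finset.sum_congr rfl fun n _ => ?_
    rw [hsemi i, hfix i _ (hy n), scaleVarEquiv_apply, scaleVar_T, smul_assoc]
    congr 1
    rw [← zpow_mul, Units.val_zpow_eq_zpow_val, Units.val_mk0]
  have hum : Units.mk0 ζ (hζ.ne_zero hm.ne') ^ (m : ℤ) = 1 := by
    apply Units.ext
    rw [Units.val_zpow_eq_zpow_val, Units.val_one, Units.val_mk0, zpow_natCast]
    exact hζ.pow_eq_one
  have hpow_eq : ∀ i j : ℤ, (i : ZMod m) = (j : ZMod m) →
      Units.mk0 ζ (hζ.ne_zero hm.ne') ^ i = Units.mk0 ζ (hζ.ne_zero hm.ne') ^ j := by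
    intro i j hij
    obtain ⟨q, hq⟩ := ((ZMod.intCast_eq_intCast_iff _ _ _).mp hij).dvd
    have hj : j = i + (m : ℤ) * q := by linarith
    rw [hj, zpow_add, zpow_mul, hum, one_zpow, mul_one]
  have hzpow_eq : ∀ i j : ℤ,
      Units.mk0 ζ (hζ.ne_zero hm.ne') ^ i = Units.mk0 ζ (hζ.ne_zero hm.ne') ^ j →
      ∀ n : ℤ, ζ ^ (i * n) = ζ ^ (j * n) := by
    intro i j h n
    have := congrArg (fun u : kˣ => ((u ^ n : kˣ) : k)) h
    simpa only [← zpow_mul, Units.val_zpow_eq_zpow_val, Units.val_mk0] using this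
  have hw_eq : ∀ i j : ℤ,
      Units.mk0 ζ (hζ.ne_zero hm.ne') ^ i = Units.mk0 ζ (hζ.ne_zero hm.ne') ^ j →
      w i = w j := by
    intro i j h
    refine LinearEquiv.ext fun x => ?_
    obtain ⟨y, ⟨hyF, hyx⟩, -⟩ := hrep x
    rw [hyx, hkey i y hyF, hkey j y hyF]
    refine Finset.sum_congr rfl fun n _ => ?_
    rw [hzpow_eq i j h (n : ℤ)]
  have hw_comp : ∀ (i j : ℤ) (x : LaurentPolynomial k ⊗[k] g),
      w (i + j) x = w i (w j x) := by
    intro i j x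
    obtain ⟨y, ⟨hyF, hyx⟩, -⟩ := hrep x
    rw [hyx, hkey (i + j) y hyF, hkey j y hyF, map_sum]
    refine Finset.sum_congr rfl fun n _ => ?_
    rw [map_smul, hsemi i, hfix i _ (hyF n), scaleVarEquiv_apply, scaleVar_T, smul_assoc,
      smul_smul, ← zpow_mul, Units.val_zpow_eq_zpow_val, Units.val_mk0, ← zpow_add₀ hζ0]
    congr 2
    ring
  have hsymm_comp : ∀ (i j : ℤ) (x : LaurentPolynomial k ⊗[k] g),
      (idTensorIota (g := g) ζ (hζ.ne_zero hm.ne') j).symm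
          ((idTensorIota ζ (hζ.ne_zero hm.ne') i).symm x)
        = (idTensorIota ζ (hζ.ne_zero hm.ne') (i + j)).symm x := by
    intro i j x
    apply (idTensorIota (g := g) ζ (hζ.ne_zero hm.ne') (i + j)).injective
    rw [LinearEquiv.apply_symm_apply, ← idTensorIota_comp, LinearEquiv.apply_symm_apply,
      LinearEquiv.apply_symm_apply]
  refine ⟨⟨?_, ?_, ?_⟩, ?_⟩
  · -- each `u i` is an `S`-algebra automorphism
    intro i
    constructor
    · intro s x
      simp only [LinearEquiv.trans_apply]
      rw [idTensorIota_symm_smul, hsemi i, AlgEquiv.apply_symm_apply]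
    · intro x y
      simp only [LinearEquiv.trans_apply]
      rw [idTensorIota_symm_bracket, hbracket]
  · -- `u i` depends only on `i` mod `m`
    intro i j hij
    have h := hpow_eq i j hij
    have hiota : idTensorIota (g := g) ζ (hζ.ne_zero hm.ne') i
        = idTensorIota ζ (hζ.ne_zero hm.ne') j := by
      unfold idTensorIota; rw [h]
    show (idTensorIota ζ (hζ.ne_zero hm.ne') i).symm.trans (w i)
        = (idTensorIota ζ (hζ.ne_zero hm.ne') j).symm.trans (w j)
    rw [hiota, hw_eq i j h]
  · -- the cocycle identity
    intro i j
    refine LinearEquiv.ext fun x => ?_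
    simp only [gammaAct, LinearEquiv.trans_apply, LinearEquiv.symm_apply_apply]
    rw [hsymm_comp, hw_comp]
  · -- the fixed-point set is `F`
    ext x
    simp only [cocycleFixed, Set.mem_setOf_eq, SetLike.mem_coe, LinearEquiv.trans_apply,
      LinearEquiv.symm_apply_apply]
    constructor
    · intro hx
      obtain ⟨y, ⟨hyF, hyx⟩, hyu⟩ := hrep x
      have h1 : (fun n : Fin m => ζ ^ ((n : ℤ)) • y n) = y := by
        apply hyu
        constructor
        · intro n
          have hmem : (algebraMap k (LaurentPolynomial k) (ζ ^ ((n : ℤ)))) ∈ Rsub k m :=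
            Subalgebra.algebraMap_mem _ _
          have hsm := F.smul_mem (⟨_, hmem⟩ : ↥(Rsub k m)) (hyF n)
          have hco : ((⟨_, hmem⟩ : ↥(Rsub k m)) • y n : LaurentPolynomial k ⊗[k] g)
              = ζ ^ ((n : ℤ)) • y n := by
            show (algebraMap k (LaurentPolynomial k) (ζ ^ ((n : ℤ)))) • y n = _
            rw [algebraMap_smul]
          rwa [hco] at hsm
        · have hx1 : x = ∑ n : Fin m, ζ ^ ((1 : ℤ) * (n : ℤ)) •
              ((T ((n : ℤ)) : LaurentPolynomial k) • y n) := by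
            conv_lhs => rw [← hx 1, hyx]
            rw [hkey 1 y hyF]
          rw [hx1]
          refine Finset.sum_congr rfl fun n _ => ?_
          rw [one_mul, smul_comm]
      have hzero : ∀ n : Fin m, n ≠ 0 → y n = 0 := by
        intro n hn
        have h2 : ζ ^ ((n : ℤ)) • y n = y n := congrFun h1 n
        have h3 : ζ ^ ((n : ℤ)) ≠ 1 := by
          intro hcon
          rw [show ((n : ℤ)) = (((n : ℕ) : ℤ)) from rfl, zpow_natCast] at hcon
          have hdvd : m ∣ (n : ℕ) := hζ.dvd_of_pow_eq_one _ hcon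
          have : (n : ℕ) = 0 := Nat.eq_zero_of_dvd_of_lt hdvd n.isLt
          exact hn (Fin.ext (by simpa using this))
        have h4 : (ζ ^ ((n : ℤ)) - 1) • y n = 0 := by
          rw [sub_smul (R := k) (M := LaurentPolynomial k ⊗[k] g), h2, one_smul, sub_self]
        rcases smul_eq_zero.mp h4 with h | h
        · exact absurd (sub_eq_zero.mp h) h3
        · exact h
      have hx0 : x = y 0 := by
        rw [hyx, Finset.sum_eq_single (0 : Fin m)
          (fun b _ hb => by rw [hzero b hb, smul_zero])
          (fun h => absurd (Finset.mem_univ _) h)]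
        rw [show (((0 : Fin m)) : ℤ) = 0 by simp, T_zero, one_smul]
      rw [hx0]
      exact hyF 0
    · intro hxF i
      exact hfix i x hxF

end LoopPaper
end
end

section
/- The derived algebra of the loop algebra L(g,σ) equals the loop algebra of the derived algebra: [L(g,σ), L(g,σ)] = L(g', σ|_{g'}) as R-subalgebras of g(S), where g' := [g,g] is the derived algebra of g (which is stable under σ, and σ|_{g'} satisfies (σ|_{g'})^m = id). -/
open scoped TensorProduct
open LaurentPolynomial

set_option maxHeartbeats 1000000
set_option synthInstance.maxHeartbeats 400000

noncomputable section

namespace LoopPaper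

variable {k : Type*} [Field k] {g : Type*} [LieRing g] [LieAlgebra k g]

/-! ### Auxiliary results for Statement 12 -/

lemma lie_sum' {L : Type*} [LieRing L] {ι : Type*} (s : Finset ι) (x : L) (f : ι → L) :
    ⁅x, ∑ i ∈ s, f i⁆ = ∑ i ∈ s, ⁅x, f i⁆ := by
  classical
  induction s using Finset.induction with
  | empty => simp
  | insert _ _ h ih => rw [Finset.sum_insert h, Finset.sum_insert h, lie_add, ih]

lemma sum_lie' {L : Type*} [LieRing L] {ι : Type*} (s : Finset ι) (x : L) (f : ι → L) :
    ⁅∑ i ∈ s, f i, x⁆ = ∑ i ∈ s, ⁅f i, x⁆ := by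
  classical
  induction s using Finset.induction with
  | empty => simp
  | insert _ _ h ih => rw [Finset.sum_insert h, Finset.sum_insert h, add_lie, ih]

lemma sum_shift' {M : Type*} [AddCommMonoid M] (f : ℕ → M) {m : ℕ} (hm : 0 < m)
    (hf : f m = f 0) : ∑ r ∈ Finset.range m, f (r + 1) = ∑ r ∈ Finset.range m, f r := by
  obtain ⟨s, rfl⟩ := Nat.exists_eq_add_of_lt hm
  simp only [zero_add] at hf ⊢
  rw [Finset.sum_range_succ (fun r => f (r + 1)) s, Finset.sum_range_succ' f s, hf]

lemma pow_apply_eigen (σ : g ≃ₗ[k] g) {c : k} {x : g} (hx : σ x = c • x) (r : ℕ) :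
    (σ ^ r) x = c ^ r • x := by
  induction r with
  | zero => simp
  | succ n ih =>
    have h : (σ ^ (n + 1)) x = σ ((σ ^ n) x) := by rw [pow_succ']; rfl
    rw [h, ih, map_smul, hx, smul_smul, pow_succ, mul_comm]

/-- The projection onto the `ζ^n`-eigenspace of `σ` (of period `m`). -/
def projP (σ : g ≃ₗ[k] g) (ζ : k) (m : ℕ) (n : ℤ) : g →ₗ[k] g :=
  (m : k)⁻¹ • ∑ r ∈ Finset.range m, ζ ^ (-(n * (r : ℤ))) • (σ ^ r : g ≃ₗ[k] g).toLinearMap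

lemma projP_apply (σ : g ≃ₗ[k] g) (ζ : k) (m : ℕ) (n : ℤ) (x : g) :
    projP σ ζ m n x = (m : k)⁻¹ • ∑ r ∈ Finset.range m, ζ ^ (-(n * (r : ℤ))) • (σ ^ r) x := by
  simp [projP]

lemma projP_eq_self {σ : g ≃ₗ[k] g} {ζ : k} {m : ℕ} (hζ0 : ζ ≠ 0) (hmk : (m : k) ≠ 0)
    {n : ℤ} {x : g} (hx : σ x = ζ ^ n • x) : projP σ ζ m n x = x := by
  rw [projP_apply]
  have h : ∀ r ∈ Finset.range m, ζ ^ (-(n * (r : ℤ))) • (σ ^ r) x = x := by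
    intro r _
    rw [pow_apply_eigen σ hx r, smul_smul, ← zpow_natCast (ζ ^ n) r, ← zpow_mul,
      ← zpow_add₀ hζ0]
    rw [mul_comm n (r : ℤ), neg_add_cancel, zpow_zero, one_smul]
  rw [Finset.sum_congr rfl h, Finset.sum_const, Finset.card_range, ← Nat.cast_smul_eq_nsmul k,
    smul_smul, inv_mul_cancel₀ hmk, one_smul]

lemma projP_eq_zero {σ : g ≃ₗ[k] g} {ζ : k} {m : ℕ} (hζ0 : ζ ≠ 0) (hζm : ζ ^ m = 1)
    {n j : ℤ} (hne : ζ ^ j ≠ ζ ^ n) {x : g} (hx : σ x = ζ ^ j • x) :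
    projP σ ζ m n x = 0 := by
  rw [projP_apply]
  have h : ∀ r ∈ Finset.range m,
      ζ ^ (-(n * (r : ℤ))) • (σ ^ r) x = (ζ ^ (j - n)) ^ r • x := by
    intro r _
    rw [pow_apply_eigen σ hx r, smul_smul, ← zpow_natCast (ζ ^ j) r, ← zpow_mul,
      ← zpow_add₀ hζ0, ← zpow_natCast (ζ ^ (j - n)) r, ← zpow_mul]
    congr 2
    ring
  rw [Finset.sum_congr rfl h, ← Finset.sum_smul]
  have hc1 : ζ ^ (j - n) ≠ 1 := by
    intro hc
    apply hne
    have h2 : ζ ^ j = ζ ^ (j - n) * ζ ^ n := by rw [← zpow_add₀ hζ0, sub_add_cancel]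
    rw [h2, hc, one_mul]
  have hcm : (ζ ^ (j - n)) ^ m = 1 := by
    rw [← zpow_natCast (ζ ^ (j - n)) m, ← zpow_mul, mul_comm, zpow_mul, zpow_natCast, hζm,
      one_zpow]
  rw [geom_sum_eq hc1, hcm, sub_self, zero_div, zero_smul, smul_zero]

lemma projP_sum {σ : g ≃ₗ[k] g} {ζ : k} {m : ℕ} (hm : 0 < m) (hζ0 : ζ ≠ 0)
    (hmk : (m : k) ≠ 0) (hζm : ζ ^ m = 1) (hprim : ∀ r : ℕ, 0 < r → r < m → ζ ^ r ≠ 1)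
    (x : g) : ∑ l ∈ Finset.range m, projP σ ζ m (l : ℤ) x = x := by
  have h1 : ∑ l ∈ Finset.range m, projP σ ζ m (l : ℤ) x
      = (m : k)⁻¹ • ∑ r ∈ Finset.range m,
          (∑ l ∈ Finset.range m, (ζ ^ (-(r : ℤ))) ^ l) • (σ ^ r) x := by
    simp only [projP_apply, ← Finset.smul_sum]
    congr 1
    rw [Finset.sum_comm]
    refine Finset.sum_congr rfl fun r _ => ?_
    rw [Finset.sum_smul]
    refine Finset.sum_congr rfl fun l _ => ?_
    congr 1
    rw [← zpow_natCast (ζ ^ (-(r : ℤ))) l, ← zpow_mul]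
    congr 1
    ring
  rw [h1]
  have h2 : ∀ r ∈ Finset.range m, r ≠ 0 →
      (∑ l ∈ Finset.range m, (ζ ^ (-(r : ℤ))) ^ l) • (σ ^ r) x = 0 := by
    intro r hr hr0
    have hc1 : ζ ^ (-(r : ℤ)) ≠ 1 := by
      intro hc
      rw [zpow_neg, zpow_natCast, inv_eq_one] at hc
      exact hprim r (Nat.pos_of_ne_zero hr0) (Finset.mem_range.mp hr) hc
    have hcm : (ζ ^ (-(r : ℤ))) ^ m = 1 := by
      rw [zpow_neg, zpow_natCast, inv_pow, ← pow_mul, mul_comm, pow_mul, hζm, one_pow, inv_one]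
    rw [geom_sum_eq hc1, hcm, sub_self, zero_div, zero_smul]
  rw [Finset.sum_eq_single_of_mem 0 (Finset.mem_range.mpr hm) h2]
  simp only [Nat.cast_zero, neg_zero, zpow_zero, one_pow, Finset.sum_const,
    Finset.card_range, pow_zero, LinearEquiv.coe_one, id_eq, nsmul_eq_mul, mul_one]
  rw [smul_smul, inv_mul_cancel₀ hmk, one_smul]

lemma projP_eig {σ : g ≃ₗ[k] g} {ζ : k} {m : ℕ} (hm : 0 < m) (hζ0 : ζ ≠ 0)
    (hζm : ζ ^ m = 1) (hσ : σ ^ m = 1) (n : ℤ) (x : g) :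
    σ (projP σ ζ m n x) = ζ ^ n • projP σ ζ m n x := by
  set f : ℕ → g := fun r => ζ ^ (n * (1 - (r : ℤ))) • (σ ^ r) x with hfdef
  have hstep : ∀ r : ℕ, σ (ζ ^ (-(n * (r : ℤ))) • (σ ^ r) x) = f (r + 1) := by
    intro r
    have h : (σ ^ (r + 1)) x = σ ((σ ^ r) x) := by rw [pow_succ']; rfl
    rw [map_smul, hfdef]
    simp only
    rw [h]
    congr 1
    push_cast
    ring_nf
  have hfm : f m = f 0 := by
    have h1 : (σ ^ m) x = x := by rw [hσ]; rfl
    simp only [hfdef, Nat.cast_zero, pow_zero, LinearEquiv.coe_one, id_eq, h1]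
    congr 1
    have h2 : n * (1 - (m : ℤ)) = n + m * (-n) := by ring
    rw [h2, zpow_add₀ hζ0, zpow_mul, zpow_natCast, hζm, one_zpow, mul_one]
    norm_num
  have hback : ∀ r : ℕ, f r = ζ ^ n • (ζ ^ (-(n * (r : ℤ))) • (σ ^ r) x) := by
    intro r
    rw [hfdef]
    simp only
    rw [smul_smul, ← zpow_add₀ hζ0]
    congr 2
    ring
  rw [projP_apply, map_smul, map_sum]
  rw [Finset.sum_congr rfl (fun r _ => hstep r), sum_shift' f hm hfm,
    Finset.sum_congr rfl (fun r _ => hback r), ← Finset.smul_sum, smul_comm]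

lemma lie_mem_rhsSpan {ζ : k} (hζ0 : ζ ≠ 0) {σ : g ≃ₗ[k] g} (hbr : IsLieAut σ)
    {x y : LaurentPolynomial k ⊗[k] g} (hx : x ∈ loopCarrier ζ σ) (hy : y ∈ loopCarrier ζ σ) :
    ⁅x, y⁆ ∈ Submodule.span k {p : LaurentPolynomial k ⊗[k] g |
          ∃ (i : ℤ) (x : g),
            x ∈ Submodule.span k {w : g | ∃ a b : g, ⁅a, b⁆ = w} ∧
            σ x = ζ ^ i • x ∧ p = T i ⊗ₜ[k] x} := by
  have key : ∀ p ∈ {p : LaurentPolynomial k ⊗[k] g |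
      ∃ (i : ℤ) (x : g), σ x = ζ ^ i • x ∧ p = T i ⊗ₜ[k] x},
      ∀ q, q ∈ loopCarrier ζ σ → ⁅p, q⁆ ∈ Submodule.span k {p : LaurentPolynomial k ⊗[k] g |
          ∃ (i : ℤ) (x : g),
            x ∈ Submodule.span k {w : g | ∃ a b : g, ⁅a, b⁆ = w} ∧
            σ x = ζ ^ i • x ∧ p = T i ⊗ₜ[k] x} := by
    rintro p ⟨i, a, ha, rfl⟩ q hq
    unfold loopCarrier at hq
    induction hq using Submodule.span_induction with
    | mem q hq =>
      obtain ⟨j, b, hb, rfl⟩ := hq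
      rw [LieAlgebra.ExtendScalars.bracket_tmul, ← T_add]
      refine Submodule.subset_span ⟨i + j, ⁅a, b⁆, Submodule.subset_span ⟨a, b, rfl⟩, ?_, rfl⟩
      rw [hbr, ha, hb, smul_lie, lie_smul, smul_smul, ← zpow_add₀ hζ0]
    | zero =>
      have h0 : ⁅(T i ⊗ₜ[k] a : LaurentPolynomial k ⊗[k] g), (0 : LaurentPolynomial k ⊗[k] g)⁆ = 0 :=
        lie_zero (T i ⊗ₜ[k] a : LaurentPolynomial k ⊗[k] g)
      rw [h0]; exact zero_mem _
    | add q r _ _ hq hr =>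
      have h0 : ⁅(T i ⊗ₜ[k] a : LaurentPolynomial k ⊗[k] g), q + r⁆ = ⁅T i ⊗ₜ[k] a, q⁆ + ⁅T i ⊗ₜ[k] a, r⁆ :=
        lie_add (T i ⊗ₜ[k] a : LaurentPolynomial k ⊗[k] g) q r
      rw [h0]; exact add_mem hq hr
    | smul c q _ hq =>
      have h0 : ⁅(T i ⊗ₜ[k] a : LaurentPolynomial k ⊗[k] g), c • q⁆ = c • ⁅T i ⊗ₜ[k] a, q⁆ :=
        lie_smul c (T i ⊗ₜ[k] a : LaurentPolynomial k ⊗[k] g) q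
      rw [h0]; exact Submodule.smul_mem _ _ hq
  unfold loopCarrier at hx
  induction hx using Submodule.span_induction with
  | mem p hp => exact key p hp y hy
  | zero =>
    have h0 : ⁅(0 : LaurentPolynomial k ⊗[k] g), y⁆ = 0 := zero_lie y
    rw [h0]; exact zero_mem _
  | add p r _ _ hp hr =>
    have h0 : ⁅p + r, y⁆ = ⁅p, y⁆ + ⁅r, y⁆ := add_lie p r y
    rw [h0]; exact add_mem hp hr
  | smul c p _ hp =>
    have h0 : ⁅c • p, y⁆ = c • ⁅p, y⁆ := smul_lie c p y
    rw [h0]; exact Submodule.smul_mem _ _ hp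

lemma bracket_proj_mem {m : ℕ} (hm : 0 < m) {ζ : k} (hζ0 : ζ ≠ 0) (hζm : ζ ^ m = 1)
    (hmk : (m : k) ≠ 0) (hprim : ∀ r : ℕ, 0 < r → r < m → ζ ^ r ≠ 1)
    {σ : g ≃ₗ[k] g} (hbr : IsLieAut σ) (hσ : σ ^ m = 1) (i : ℤ) (a b : g) :
    (T i ⊗ₜ[k] (projP σ ζ m i ⁅a, b⁆) : LaurentPolynomial k ⊗[k] g) ∈
      Submodule.span k {w : LaurentPolynomial k ⊗[k] g |
        ∃ x, x ∈ loopAlgebra m ζ hζ0 hζm σ hbr hσ ∧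
        ∃ y, y ∈ loopAlgebra m ζ hζ0 hζm σ hbr hσ ∧ ⁅x, y⁆ = w} := by
  have ha : a = ∑ j ∈ Finset.range m, projP σ ζ m (j : ℤ) a :=
    (projP_sum hm hζ0 hmk hζm hprim a).symm
  have hb : b = ∑ l ∈ Finset.range m, projP σ ζ m (l : ℤ) b :=
    (projP_sum hm hζ0 hmk hζm hprim b).symm
  have hab : ⁅a, b⁆ = ∑ j ∈ Finset.range m, ∑ l ∈ Finset.range m,
      ⁅projP σ ζ m (j : ℤ) a, projP σ ζ m (l : ℤ) b⁆ := by
    conv_lhs => rw [ha, hb]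
    rw [sum_lie']
    exact Finset.sum_congr rfl fun j _ => lie_sum' _ _ _
  rw [hab]
  simp only [map_sum, TensorProduct.tmul_sum]
  refine Submodule.sum_mem _ fun j _ => Submodule.sum_mem _ fun l _ => ?_
  set u := projP σ ζ m (j : ℤ) a with hu_def
  set v := projP σ ζ m (l : ℤ) b with hv_def
  have hu : σ u = ζ ^ (j : ℤ) • u := projP_eig hm hζ0 hζm hσ (j : ℤ) a
  have hv : σ v = ζ ^ (l : ℤ) • v := projP_eig hm hζ0 hζm hσ (l : ℤ) b
  have huv : σ ⁅u, v⁆ = ζ ^ ((j : ℤ) + (l : ℤ)) • ⁅u, v⁆ := by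
    rw [hbr, hu, hv, smul_lie, lie_smul, smul_smul, ← zpow_add₀ hζ0]
  by_cases hcase : ζ ^ ((j : ℤ) + (l : ℤ)) = ζ ^ i
  · have hproj : projP σ ζ m i ⁅u, v⁆ = ⁅u, v⁆ :=
      projP_eq_self hζ0 hmk (by rw [huv, hcase])
    rw [hproj]
    have heq : ⁅(T (j : ℤ) ⊗ₜ[k] u : LaurentPolynomial k ⊗[k] g), T (i - (j : ℤ)) ⊗ₜ[k] v⁆
        = (T i ⊗ₜ[k] ⁅u, v⁆ : LaurentPolynomial k ⊗[k] g) := by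
      rw [LieAlgebra.ExtendScalars.bracket_tmul, ← T_add,
        show (j : ℤ) + (i - (j : ℤ)) = i from by ring]
    rw [← heq]
    refine Submodule.subset_span ⟨_, ?_, _, ?_, rfl⟩
    · exact Submodule.subset_span ⟨(j : ℤ), u, hu, rfl⟩
    · refine Submodule.subset_span ⟨i - (j : ℤ), v, ?_, rfl⟩
      have hz : ζ ^ (i - (j : ℤ)) = ζ ^ (l : ℤ) := by
        rw [zpow_sub₀ hζ0, ← hcase, zpow_add₀ hζ0, mul_comm, mul_div_assoc,
          div_self (zpow_ne_zero _ hζ0), mul_one]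
      rw [hv, hz]
  · have hproj : projP σ ζ m i ⁅u, v⁆ = 0 := projP_eq_zero hζ0 hζm hcase huv
    rw [hproj, TensorProduct.tmul_zero]
    exact Submodule.zero_mem _

/-- The derived algebra of the loop algebra equals the loop algebra
of the derived algebra: `[L(g,σ), L(g,σ)] = L(g', σ|_{g'})` inside `g(S)`, where
`g' = [g,g]`. -/
theorem statement12 {k : Type*} [Field k] [CharZero k] {g : Type*} [LieRing g] [LieAlgebra k g]
    (m : ℕ) (hm : 0 < m) (ζ : k) (hζ : IsPrimitiveRoot ζ m)
    (σ : g ≃ₗ[k] g) (hbr : IsLieAut σ) (hσ : σ ^ m = 1) :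
    Submodule.span k {w : LaurentPolynomial k ⊗[k] g |
        ∃ x, x ∈ loopAlgebra m ζ (hζ.ne_zero hm.ne') hζ.pow_eq_one σ hbr hσ ∧
        ∃ y, y ∈ loopAlgebra m ζ (hζ.ne_zero hm.ne') hζ.pow_eq_one σ hbr hσ ∧
          ⁅x, y⁆ = w}
      = Submodule.span k {p : LaurentPolynomial k ⊗[k] g |
          ∃ (i : ℤ) (x : g),
            x ∈ Submodule.span k {w : g | ∃ a b : g, ⁅a, b⁆ = w} ∧
            σ x = ζ ^ i • x ∧ p = T i ⊗ₜ[k] x} := by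
  have hζ0 : ζ ≠ 0 := hζ.ne_zero hm.ne'
  have hζm : ζ ^ m = 1 := hζ.pow_eq_one
  have hmk : (m : k) ≠ 0 := Nat.cast_ne_zero.mpr hm.ne'
  have hprim : ∀ r : ℕ, 0 < r → r < m → ζ ^ r ≠ 1 := fun r h1 h2 =>
    hζ.pow_ne_one_of_pos_of_lt h1.ne' h2
  apply le_antisymm
  · rw [Submodule.span_le]
    rintro w ⟨x, hx, y, hy, rfl⟩
    exact lie_mem_rhsSpan hζ0 hbr hx hy
  · rw [Submodule.span_le]
    rintro p ⟨i, x, hx', heig, rfl⟩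
    have hxP : x = projP σ ζ m i x := (projP_eq_self hζ0 hmk heig).symm
    have key : ∀ y ∈ Submodule.span k {w : g | ∃ a b : g, ⁅a, b⁆ = w},
        (T i ⊗ₜ[k] (projP σ ζ m i y) : LaurentPolynomial k ⊗[k] g) ∈
          Submodule.span k {w : LaurentPolynomial k ⊗[k] g |
            ∃ x, x ∈ loopAlgebra m ζ (hζ.ne_zero hm.ne') hζ.pow_eq_one σ hbr hσ ∧
            ∃ y, y ∈ loopAlgebra m ζ (hζ.ne_zero hm.ne') hζ.pow_eq_one σ hbr hσ ∧
              ⁅x, y⁆ = w} := by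
      intro y hy
      induction hy using Submodule.span_induction with
      | mem q hq =>
        obtain ⟨a, b, rfl⟩ := hq
        exact bracket_proj_mem hm hζ0 hζm hmk hprim hbr hσ i a b
      | zero =>
        rw [map_zero, TensorProduct.tmul_zero]
        exact Submodule.zero_mem _
      | add q r _ _ hq hr =>
        rw [map_add, TensorProduct.tmul_add]
        exact Submodule.add_mem _ hq hr
      | smul c q _ hq =>
        rw [map_smul, TensorProduct.tmul_smul]
        exact Submodule.smul_mem _ c hq
    have hres := key x hx'
    rw [← hxP] at hres
    exact hres


end LoopPaper
end
end
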